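/- Let f : 2^U → ℝ≥0 be a submodular function with multilinear extension F. For every S ⊆ U, every i ∈ S, every j ∈ U \ S, and every t ∈ [0,1], we have F(t·1_{S−i+j}) − F(t·1_S) ≥ t·(∇_j F(t·1_S) − ∇_i F(t·1_S)). -/
import Mathlib


open Finset

/-- The multilinear extension of a set function. -/
noncomputable def multilinear {U : Type*} [Fintype U] [DecidableEq U]
    (f : Finset U → ℝ) (x : U → ℝ) : ℝ :=
  ∑ S : Finset U, f S * (∏ i ∈ S, x i) * ∏ i ∈ Sᶜ, (1 - x i)

/-- The partial derivative of the multilinear extension in coordinate `i`. -/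
noncomputable def gradF {U : Type*} [Fintype U] [DecidableEq U]
    (f : Finset U → ℝ) (i : U) (x : U → ℝ) : ℝ :=
  multilinear f (Function.update x i 1) - multilinear f (Function.update x i 0)

section Aux

variable {U : Type*} [Fintype U] [DecidableEq U]

/-- Multilinear extension restricted to a ground set `V`. -/
noncomputable def mlOn (V : Finset U) (f : Finset U → ℝ) (x : U → ℝ) : ℝ :=
  ∑ T ∈ V.powerset, f T * (∏ i ∈ T, x i) * ∏ i ∈ V \ T, (1 - x i)

lemma multilinear_eq_mlOn (f : Finset U → ℝ) (x : U → ℝ) :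
    multilinear f x = mlOn univ f x := by
  unfold multilinear mlOn
  rw [Finset.powerset_univ]
  refine Finset.sum_congr rfl fun T _ => ?_
  rw [Finset.compl_eq_univ_sdiff]

lemma mlOn_congr {V : Finset U} {f : Finset U → ℝ} {x y : U → ℝ}
    (h : ∀ u ∈ V, x u = y u) : mlOn V f x = mlOn V f y := by
  unfold mlOn
  refine Finset.sum_congr rfl fun T hT => ?_
  rw [Finset.mem_powerset] at hT
  congr 1
  · congr 1
    exact Finset.prod_congr rfl fun u hu => h u (hT hu)
  · exact Finset.prod_congr rfl fun u hu => by rw [h u (Finset.mem_sdiff.mp hu).1]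

lemma mlOn_insert {V : Finset U} {k : U} (hk : k ∉ V) (f : Finset U → ℝ) (x : U → ℝ) :
    mlOn (insert k V) f x
      = (1 - x k) * mlOn V f x + x k * mlOn V (fun T => f (insert k T)) x := by
  unfold mlOn
  have hdisj : Disjoint V.powerset (V.powerset.image (insert k)) := by
    rw [Finset.disjoint_left]
    intro T hT hT2
    rw [Finset.mem_powerset] at hT
    obtain ⟨T', _, rfl⟩ := Finset.mem_image.mp hT2
    exact hk (hT (Finset.mem_insert_self k T'))
  have hinj : ∀ T ∈ V.powerset, ∀ T' ∈ V.powerset, insert k T = insert k T' → T = T' := by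
    intro T hT T' hT' h
    rw [Finset.mem_powerset] at hT hT'
    have h2 : (insert k T).erase k = (insert k T').erase k := by rw [h]
    rwa [Finset.erase_insert (fun h => hk (hT h)),
      Finset.erase_insert (fun h => hk (hT' h))] at h2
  rw [Finset.powerset_insert, Finset.sum_union hdisj, Finset.sum_image hinj,
      Finset.mul_sum, Finset.mul_sum]
  congr 1
  · refine Finset.sum_congr rfl fun T hT => ?_
    rw [Finset.mem_powerset] at hT
    have h1 : insert k V \ T = insert k (V \ T) :=
      Finset.insert_sdiff_of_notMem _ (fun hkT => hk (hT hkT))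
    have h2 : k ∉ V \ T := fun h => hk (Finset.mem_sdiff.mp h).1
    rw [h1, Finset.prod_insert h2]
    ring
  · refine Finset.sum_congr rfl fun T hT => ?_
    rw [Finset.mem_powerset] at hT
    have hkT : k ∉ T := fun h => hk (hT h)
    have h1 : insert k V \ insert k T = V \ T := by
      ext u
      simp only [Finset.mem_sdiff, Finset.mem_insert, not_or]
      constructor
      · rintro ⟨hu1, hu2, hu3⟩
        exact ⟨hu1.resolve_left hu2, hu3⟩
      · rintro ⟨hu1, hu2⟩
        exact ⟨Or.inr hu1, fun h => hk (h ▸ hu1), hu2⟩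
    rw [h1, Finset.prod_insert hkT]
    ring

lemma mlOn_combo {V : Finset U} {p q r s : Finset U → ℝ} {x : U → ℝ}
    (h : ∀ T ⊆ V, p T + q T ≤ r T + s T) (hx : ∀ u, 0 ≤ x u ∧ x u ≤ 1) :
    mlOn V p x + mlOn V q x ≤ mlOn V r x + mlOn V s x := by
  unfold mlOn
  rw [← Finset.sum_add_distrib, ← Finset.sum_add_distrib]
  refine Finset.sum_le_sum fun T hT => ?_
  rw [Finset.mem_powerset] at hT
  have h1 : (0:ℝ) ≤ ∏ i ∈ T, x i := Finset.prod_nonneg fun u _ => (hx u).1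
  have h2 : (0:ℝ) ≤ ∏ i ∈ V \ T, (1 - x i) :=
    Finset.prod_nonneg fun u _ => by linarith [(hx u).2]
  have hc := h T hT
  nlinarith [mul_nonneg h1 h2]

lemma multilinear_update (f : Finset U → ℝ) (x : U → ℝ) (k : U) (c : ℝ) :
    multilinear f (Function.update x k c)
      = (1 - c) * mlOn (univ.erase k) f x
        + c * mlOn (univ.erase k) (fun T => f (insert k T)) x := by
  rw [multilinear_eq_mlOn]
  have h : (univ : Finset U) = insert k (univ.erase k) :=
    (Finset.insert_erase (Finset.mem_univ k)).symm
  conv_lhs => rw [h]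
  rw [mlOn_insert (Finset.notMem_erase k univ), Function.update_self]
  congr 1
  · congr 1
    exact mlOn_congr fun u hu => Function.update_of_ne (Finset.ne_of_mem_erase hu) _ _
  · congr 1
    exact mlOn_congr fun u hu => Function.update_of_ne (Finset.ne_of_mem_erase hu) _ _

lemma multilinear_split (f : Finset U → ℝ) (x : U → ℝ) (k : U) :
    multilinear f x
      = (1 - x k) * mlOn (univ.erase k) f x
        + x k * mlOn (univ.erase k) (fun T => f (insert k T)) x := by
  conv_lhs => rw [← Function.update_eq_self k x]
  exact multilinear_update f x k (x k)

end Aux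

theorem stmt4 {U : Type*} [Fintype U] [DecidableEq U]
    (f : Finset U → ℝ) (hf0 : ∀ S, 0 ≤ f S)
    (hsub : ∀ S T : Finset U, S ⊆ T → ∀ i ∉ T,
      f (insert i T) - f T ≤ f (insert i S) - f S)
    (S : Finset U) (i : U) (hi : i ∈ S) (j : U) (hj : j ∉ S)
    (t : ℝ) (ht : t ∈ Set.Icc (0:ℝ) 1) :
    t * (gradF f j (fun u => if u ∈ S then t else 0)
          - gradF f i (fun u => if u ∈ S then t else 0))
      ≤ multilinear f (fun u => if u ∈ insert j (S.erase i) then t else 0)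
          - multilinear f (fun u => if u ∈ S then t else 0) := by
  obtain ⟨ht0, ht1⟩ := ht
  have hij : i ≠ j := fun h => hj (h ▸ hi)
  set z : U → ℝ := fun u => if u ∈ S.erase i then t else 0 with hzdef
  set x : U → ℝ := fun u => if u ∈ S then t else 0 with hxdef
  set y : U → ℝ := fun u => if u ∈ insert j (S.erase i) then t else 0 with hydef
  have hzx : ∀ u, u ≠ i → z u = x u := by
    intro u hu
    simp [hzdef, hxdef, Finset.mem_erase, hu]
  have hxi : x i = t := by simp [hxdef, hi]
  have hzi : z i = 0 := by simp [hzdef]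
  have hzj : z j = 0 := by simp [hzdef, Finset.mem_erase, hj]
  have hx_eq : x = Function.update z i t := by
    funext u
    rcases eq_or_ne u i with rfl | hu
    · rw [Function.update_self]; exact hxi
    · rw [Function.update_of_ne hu]; exact (hzx u hu).symm
  have hy_eq : y = Function.update z j t := by
    funext u
    rcases eq_or_ne u j with rfl | hu
    · rw [Function.update_self]; simp [hydef]
    · rw [Function.update_of_ne hu]
      simp only [hydef, hzdef, Finset.mem_insert, hu, false_or]
  have hz01 : ∀ u, 0 ≤ z u ∧ z u ≤ 1 := by
    intro u
    simp only [hzdef]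
    split_ifs <;> constructor <;> linarith
  have h1 : multilinear f x
      = (1 - t) * mlOn (univ.erase i) f z
        + t * mlOn (univ.erase i) (fun T => f (insert i T)) z := by
    rw [hx_eq]; exact multilinear_update f z i t
  have h2 : multilinear f y
      = (1 - t) * mlOn (univ.erase j) f z
        + t * mlOn (univ.erase j) (fun T => f (insert j T)) z := by
    rw [hy_eq]; exact multilinear_update f z j t
  have h3 : mlOn (univ.erase i) f z = mlOn (univ.erase j) f z := by
    have e1 := multilinear_split f z i
    have e2 := multilinear_split f z j
    rw [hzi] at e1
    rw [hzj] at e2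
    linarith
  have hcx : ∀ u ∈ (univ : Finset U).erase i, x u = z u :=
    fun u hu => (hzx u (Finset.ne_of_mem_erase hu)).symm
  have h4 : gradF f i x
      = mlOn (univ.erase i) (fun T => f (insert i T)) z - mlOn (univ.erase i) f z := by
    unfold gradF
    rw [multilinear_update, multilinear_update, mlOn_congr hcx, mlOn_congr hcx]
    ring
  have hiW : i ∉ ((univ : Finset U).erase j).erase i := Finset.notMem_erase i _
  have hW : (univ : Finset U).erase j = insert i (((univ : Finset U).erase j).erase i) :=
    (Finset.insert_erase (Finset.mem_erase.mpr ⟨hij, Finset.mem_univ i⟩)).symm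
  have hcW : ∀ u ∈ ((univ : Finset U).erase j).erase i, x u = z u :=
    fun u hu => (hzx u (Finset.ne_of_mem_erase hu)).symm
  have e : mlOn (univ.erase j) f x
      = (1 - t) * mlOn (((univ : Finset U).erase j).erase i) f z
        + t * mlOn (((univ : Finset U).erase j).erase i) (fun T => f (insert i T)) z := by
    conv_lhs => rw [hW]
    rw [mlOn_insert hiW, mlOn_congr hcW, mlOn_congr hcW, hxi]
  have e' : mlOn (univ.erase j) (fun T => f (insert j T)) x
      = (1 - t) * mlOn (((univ : Finset U).erase j).erase i) (fun T => f (insert j T)) z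
        + t * mlOn (((univ : Finset U).erase j).erase i)
            (fun T => f (insert j (insert i T))) z := by
    conv_lhs => rw [hW]
    rw [mlOn_insert hiW, mlOn_congr hcW, mlOn_congr hcW, hxi]
  have hgradx : gradF f j x
      = ((1 - t) * mlOn (((univ : Finset U).erase j).erase i) (fun T => f (insert j T)) z
          + t * mlOn (((univ : Finset U).erase j).erase i)
              (fun T => f (insert j (insert i T))) z)
        - ((1 - t) * mlOn (((univ : Finset U).erase j).erase i) f z
          + t * mlOn (((univ : Finset U).erase j).erase i) (fun T => f (insert i T)) z) := by
    unfold gradF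
    rw [multilinear_update, multilinear_update, e, e']
    ring
  have hC : mlOn (univ.erase j) f z
      = mlOn (((univ : Finset U).erase j).erase i) f z := by
    conv_lhs => rw [hW]
    rw [mlOn_insert hiW, hzi]
    ring
  have hD : mlOn (univ.erase j) (fun T => f (insert j T)) z
      = mlOn (((univ : Finset U).erase j).erase i) (fun T => f (insert j T)) z := by
    conv_lhs => rw [hW]
    rw [mlOn_insert hiW, hzi]
    ring
  have hkey : mlOn (((univ : Finset U).erase j).erase i) (fun T => f (insert j (insert i T))) z
        + mlOn (((univ : Finset U).erase j).erase i) f z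
      ≤ mlOn (((univ : Finset U).erase j).erase i) (fun T => f (insert i T)) z
        + mlOn (((univ : Finset U).erase j).erase i) (fun T => f (insert j T)) z := by
    refine mlOn_combo (fun T hT => ?_) hz01
    have hjT : j ∉ T := fun h => by
      have := Finset.mem_erase.mp (Finset.mem_erase.mp (hT h)).2
      exact this.1 rfl
    have hjiT : j ∉ insert i T := by
      rw [Finset.mem_insert]
      rintro (h | h)
      · exact hij h.symm
      · exact hjT h
    have := hsub T (insert i T) (Finset.subset_insert i T) j hjiT
    linarith
  rw [hgradx, h4, h1, h2, h3, hC, hD]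
  nlinarith [mul_nonneg (mul_nonneg ht0 ht0)
    (by linarith [hkey] :
      (0:ℝ) ≤ mlOn (((univ : Finset U).erase j).erase i) (fun T => f (insert i T)) z
        + mlOn (((univ : Finset U).erase j).erase i) (fun T => f (insert j T)) z
        - mlOn (((univ : Finset U).erase j).erase i) (fun T => f (insert j (insert i T))) z
        - mlOn (((univ : Finset U).erase j).erase i) f z)]
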